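/- Let ℋ be the set of t-tuples (s_0,…,s_{t−1}) of integers with 1 ≤ s_j ≤ n and 0 ≤ p·s_{j+1} − s_j ≤ (p−1)(n+1) for all j (subscripts mod t). For every nonconstant monomial exponent tuple (b_0,…,b_n) with 0 ≤ b_i ≤ q−1, Σ_i b_i ≡ 0 (mod q−1), and (b_0,…,b_n) ≠ (q−1,…,q−1), there is a unique tuple (s_0,…,s_{t−1}) ∈ ℋ with λ_j = p·s_{j+1} − s_j for all j, where λ_j = Σ_{i=0}^n a_{i,j} and b_i = Σ_j p^j a_{i,j} is the base-p expansion; explicitly s_j = (1/(q−1)) Σ_{i=0}^n ( Σ_{ℓ=0}^{j−1} p^{ℓ+t−j} a_{i,ℓ} + Σ_{ℓ=j}^{t−1} p^{ℓ−j} a_{i,ℓ} ). -/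

import Mathlib

/-- The key integer quantity `c_j = ∑_{ℓ<j} p^{ℓ+t-j} L ℓ + ∑_{ℓ=j}^{t-1} p^{ℓ-j} L ℓ`. -/
def Caux (p t : ℕ) (L : ℕ → ℤ) (j : ℕ) : ℤ :=
  (∑ ℓ ∈ Finset.range j, (p:ℤ)^(ℓ + t - j) * L ℓ)
    + ∑ ℓ ∈ Finset.Ico j t, (p:ℤ)^(ℓ - j) * L ℓ

private lemma digit_sum (p : ℕ) (m k : ℕ) :
    ∑ ℓ ∈ Finset.range k, p ^ ℓ * (m / p ^ ℓ % p) = m % p ^ k := by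
  induction k with
  | zero => simp [Nat.mod_one]
  | succ k ih => rw [Finset.sum_range_succ, ih, pow_succ, Nat.mod_mul]

private lemma Caux_zero (p t : ℕ) (L : ℕ → ℤ) :
    Caux p t L 0 = ∑ ℓ ∈ Finset.range t, (p:ℤ)^ℓ * L ℓ := by
  simp [Caux, ← Nat.Ico_zero_eq_range]

private lemma Caux_t (p t : ℕ) (L : ℕ → ℤ) : Caux p t L t = Caux p t L 0 := by
  rw [Caux_zero]
  simp [Caux, Finset.Ico_self, Nat.add_sub_cancel]

private lemma Caux_rec (p t : ℕ) (L : ℕ → ℤ) {j : ℕ} (hj : j < t) :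
    (p:ℤ) * Caux p t L (j+1) - Caux p t L j = ((p:ℤ)^t - 1) * L j := by
  have e1 : (p:ℤ) * Caux p t L (j+1)
      = ((∑ ℓ ∈ Finset.range j, (p:ℤ)^(ℓ+t-j) * L ℓ) + (p:ℤ)^t * L j)
        + ∑ ℓ ∈ Finset.Ico (j+1) t, (p:ℤ)^(ℓ-j) * L ℓ := by
    unfold Caux
    rw [Finset.sum_range_succ, mul_add, mul_add, Finset.mul_sum, Finset.mul_sum]
    congr 1
    · congr 1
      · refine Finset.sum_congr rfl fun ℓ hℓ => ?_
        simp only [Finset.mem_range] at hℓ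
        have he : ℓ + t - (j+1) + 1 = ℓ + t - j := by omega
        rw [← mul_assoc, mul_comm (p:ℤ) ((p:ℤ)^(ℓ+t-(j+1))), ← pow_succ, he]
      · have he : j + t - (j+1) + 1 = t := by omega
        rw [← mul_assoc, mul_comm (p:ℤ) ((p:ℤ)^(j+t-(j+1))), ← pow_succ, he]
    · refine Finset.sum_congr rfl fun ℓ hℓ => ?_
      simp only [Finset.mem_Ico] at hℓ
      have he : ℓ - (j+1) + 1 = ℓ - j := by omega
      rw [← mul_assoc, mul_comm (p:ℤ) ((p:ℤ)^(ℓ-(j+1))), ← pow_succ, he]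
  have e2 : Caux p t L j
      = ((∑ ℓ ∈ Finset.range j, (p:ℤ)^(ℓ+t-j) * L ℓ) + L j)
        + ∑ ℓ ∈ Finset.Ico (j+1) t, (p:ℤ)^(ℓ-j) * L ℓ := by
    unfold Caux
    rw [Finset.sum_eq_sum_Ico_succ_bot hj]
    simp only [Nat.sub_self, pow_zero, one_mul]
    ring
  rw [e1, e2]; ring

private lemma Caux_pow_mul (p t : ℕ) (L : ℕ → ℤ) {j : ℕ} (hj : j ≤ t) :
    (p:ℤ)^j * Caux p t L j
      = Caux p t L 0 + ((p:ℤ)^t - 1) * ∑ ℓ ∈ Finset.range j, (p:ℤ)^ℓ * L ℓ := by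
  rw [Caux_zero, ← Finset.sum_range_add_sum_Ico (fun ℓ => (p:ℤ)^ℓ * L ℓ) hj]
  unfold Caux
  rw [mul_add, Finset.mul_sum, Finset.mul_sum]
  have e1 : ∀ ℓ ∈ Finset.range j,
      (p:ℤ)^j * ((p:ℤ)^(ℓ+t-j) * L ℓ) = (p:ℤ)^t * ((p:ℤ)^ℓ * L ℓ) := by
    intro ℓ hℓ
    simp only [Finset.mem_range] at hℓ
    rw [← mul_assoc, ← pow_add, ← mul_assoc, ← pow_add]
    have he : j + (ℓ + t - j) = t + ℓ := by omega
    rw [he]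
  have e2 : ∀ ℓ ∈ Finset.Ico j t,
      (p:ℤ)^j * ((p:ℤ)^(ℓ-j) * L ℓ) = (p:ℤ)^ℓ * L ℓ := by
    intro ℓ hℓ
    simp only [Finset.mem_Ico] at hℓ
    rw [← mul_assoc, ← pow_add]
    have he : j + (ℓ - j) = ℓ := by omega
    rw [he]
  rw [Finset.sum_congr rfl e1, Finset.sum_congr rfl e2, ← Finset.mul_sum]
  ring

private lemma coef_sum (p t : ℕ) {j : ℕ} (hj : j ≤ t) :
    ((∑ ℓ ∈ Finset.range j, (p:ℤ)^(ℓ + t - j)) + ∑ ℓ ∈ Finset.Ico j t, (p:ℤ)^(ℓ - j))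
      = ∑ k ∈ Finset.range t, (p:ℤ)^k := by
  have h1 : ∑ ℓ ∈ Finset.range j, (p:ℤ)^(ℓ + t - j) = ∑ k ∈ Finset.Ico (t-j) t, (p:ℤ)^k := by
    rw [Finset.sum_Ico_eq_sum_range]
    have ht' : t - (t - j) = j := by omega
    rw [ht']
    refine Finset.sum_congr rfl fun ℓ hℓ => ?_
    simp only [Finset.mem_range] at hℓ
    congr 1
    omega
  have h2 : ∑ ℓ ∈ Finset.Ico j t, (p:ℤ)^(ℓ - j) = ∑ k ∈ Finset.range (t-j), (p:ℤ)^k := by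
    rw [Finset.sum_Ico_eq_sum_range]
    refine Finset.sum_congr rfl fun m hm => ?_
    congr 1
    omega
  rw [h1, h2, add_comm]
  exact Finset.sum_range_add_sum_Ico _ (Nat.sub_le t j)

private lemma Caux_pos (p t : ℕ) (hp : 0 < p) (L : ℕ → ℤ) (hLnn : ∀ ℓ, 0 ≤ L ℓ)
    {ℓ₀ : ℕ} (hℓ₀ : ℓ₀ < t) (hL0 : 0 < L ℓ₀) {j : ℕ} (hj : j ≤ t) :
    0 < Caux p t L j := by
  have hppos : (0:ℤ) < (p:ℤ) := by exact_mod_cast hp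
  have hA : 0 ≤ ∑ ℓ ∈ Finset.range j, (p:ℤ)^(ℓ+t-j) * L ℓ :=
    Finset.sum_nonneg fun ℓ _ => mul_nonneg (pow_pos hppos _).le (hLnn ℓ)
  have hB : 0 ≤ ∑ ℓ ∈ Finset.Ico j t, (p:ℤ)^(ℓ-j) * L ℓ :=
    Finset.sum_nonneg fun ℓ _ => mul_nonneg (pow_pos hppos _).le (hLnn ℓ)
  unfold Caux
  rcases Nat.lt_or_ge ℓ₀ j with h | h
  · have hA' : 0 < ∑ ℓ ∈ Finset.range j, (p:ℤ)^(ℓ+t-j) * L ℓ :=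
      Finset.sum_pos' (fun ℓ _ => mul_nonneg (pow_pos hppos _).le (hLnn ℓ))
        ⟨ℓ₀, Finset.mem_range.mpr h, mul_pos (pow_pos hppos _) hL0⟩
    linarith
  · have hB' : 0 < ∑ ℓ ∈ Finset.Ico j t, (p:ℤ)^(ℓ-j) * L ℓ :=
      Finset.sum_pos' (fun ℓ _ => mul_nonneg (pow_pos hppos _).le (hLnn ℓ))
        ⟨ℓ₀, Finset.mem_Ico.mpr ⟨h, hℓ₀⟩, mul_pos (pow_pos hppos _) hL0⟩
    linarith

private lemma Caux_lt (p t : ℕ) (hp : 0 < p) (L : ℕ → ℤ) (M : ℤ)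
    (hub : ∀ ℓ, L ℓ ≤ M) {j : ℕ} (hj : j ≤ t)
    {ℓ₁ : ℕ} (hℓ₁ : ℓ₁ < t) (hL1 : L ℓ₁ < M) :
    Caux p t L j < M * ∑ k ∈ Finset.range t, (p:ℤ)^k := by
  have hppos : (0:ℤ) < (p:ℤ) := by exact_mod_cast hp
  have key : Caux p t L j
      < (∑ ℓ ∈ Finset.range j, (p:ℤ)^(ℓ+t-j) * M) + ∑ ℓ ∈ Finset.Ico j t, (p:ℤ)^(ℓ-j) * M := by
    unfold Caux
    rcases Nat.lt_or_ge ℓ₁ j with h | h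
    · have hA : ∑ ℓ ∈ Finset.range j, (p:ℤ)^(ℓ+t-j) * L ℓ
          < ∑ ℓ ∈ Finset.range j, (p:ℤ)^(ℓ+t-j) * M :=
        Finset.sum_lt_sum (fun ℓ _ => mul_le_mul_of_nonneg_left (hub ℓ) (pow_pos hppos _).le)
          ⟨ℓ₁, Finset.mem_range.mpr h, mul_lt_mul_of_pos_left hL1 (pow_pos hppos _)⟩
      have hB : ∑ ℓ ∈ Finset.Ico j t, (p:ℤ)^(ℓ-j) * L ℓ
          ≤ ∑ ℓ ∈ Finset.Ico j t, (p:ℤ)^(ℓ-j) * M :=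
        Finset.sum_le_sum fun ℓ _ => mul_le_mul_of_nonneg_left (hub ℓ) (pow_pos hppos _).le
      linarith
    · have hA : ∑ ℓ ∈ Finset.range j, (p:ℤ)^(ℓ+t-j) * L ℓ
          ≤ ∑ ℓ ∈ Finset.range j, (p:ℤ)^(ℓ+t-j) * M :=
        Finset.sum_le_sum fun ℓ _ => mul_le_mul_of_nonneg_left (hub ℓ) (pow_pos hppos _).le
      have hB : ∑ ℓ ∈ Finset.Ico j t, (p:ℤ)^(ℓ-j) * L ℓ
          < ∑ ℓ ∈ Finset.Ico j t, (p:ℤ)^(ℓ-j) * M :=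
        Finset.sum_lt_sum (fun ℓ _ => mul_le_mul_of_nonneg_left (hub ℓ) (pow_pos hppos _).le)
          ⟨ℓ₁, Finset.mem_Ico.mpr ⟨h, hℓ₁⟩, mul_lt_mul_of_pos_left hL1 (pow_pos hppos _)⟩
      linarith
  have he : (∑ ℓ ∈ Finset.range j, (p:ℤ)^(ℓ+t-j) * M) + ∑ ℓ ∈ Finset.Ico j t, (p:ℤ)^(ℓ-j) * M
      = M * ∑ k ∈ Finset.range t, (p:ℤ)^k := by
    rw [← Finset.sum_mul, ← Finset.sum_mul, ← add_mul, coef_sum p t hj, mul_comm]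
  linarith [key, he.le, he.ge]

open Fin.CommRing in
private lemma telescope (p t : ℕ) [NeZero t] (L : Fin t → ℤ) (s : Fin t → ℤ)
    (h : ∀ j : Fin t, (p:ℤ) * s (j + 1) - s j = L j) (j : Fin t) :
    ∀ k : ℕ, (p:ℤ)^k * s (j + (k : Fin t)) - s j
      = ∑ m ∈ Finset.range k, (p:ℤ)^m * L (j + (m : Fin t)) := by
  intro k
  induction k with
  | zero => simp
  | succ k ih =>
    have hcast : (((k+1 : ℕ)) : Fin t) = ((k : ℕ) : Fin t) + 1 := by push_cast; ring
    rw [Finset.sum_range_succ, ← ih, hcast, ← add_assoc]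
    have h2 := h (j + (k : Fin t))
    rw [← h2]
    ring

private lemma reindex_sum (p t j : ℕ) (hj : j < t) (g : ℕ → ℤ) :
    ∑ m ∈ Finset.range t, (p:ℤ)^m * g ((j + m) % t) = Caux p t g j := by
  have h1 : ∑ m ∈ Finset.range (t - j), (p:ℤ)^m * g ((j + m) % t)
      = ∑ ℓ ∈ Finset.Ico j t, (p:ℤ)^(ℓ - j) * g ℓ := by
    rw [Finset.sum_Ico_eq_sum_range]
    refine Finset.sum_congr rfl fun k hk => ?_
    simp only [Finset.mem_range] at hk
    rw [Nat.mod_eq_of_lt (by omega)]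
    have he : k = j + k - j := by omega
    rw [← he]
  have h2 : ∑ m ∈ Finset.Ico (t - j) t, (p:ℤ)^m * g ((j + m) % t)
      = ∑ ℓ ∈ Finset.range j, (p:ℤ)^(ℓ + t - j) * g ℓ := by
    rw [Finset.sum_Ico_eq_sum_range]
    have ht' : t - (t - j) = j := by omega
    rw [ht']
    refine Finset.sum_congr rfl fun k hk => ?_
    simp only [Finset.mem_range] at hk
    have e1 : j + (t - j + k) = t + k := by omega
    rw [e1, Nat.add_mod_left, Nat.mod_eq_of_lt (by omega)]
    have he2 : t - j + k = k + t - j := by omega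
    rw [he2]
  rw [← Finset.sum_range_add_sum_Ico (fun m => (p:ℤ)^m * g ((j + m) % t)) (Nat.sub_le t j),
    h1, h2, add_comm]
  rfl

open Fin.CommRing in
private lemma formula_core (p t : ℕ) [NeZero t] (L : ℕ → ℤ) (s : Fin t → ℤ)
    (h : ∀ j : Fin t, (p:ℤ) * s (j+1) - s j = L j.1) (j : Fin t) :
    ((p:ℤ)^t - 1) * s j = Caux p t L j.1 := by
  have htel := telescope p t (fun i : Fin t => L i.1) s h j t
  rw [Fin.natCast_self, add_zero] at htel
  have hre : ∑ m ∈ Finset.range t, (p:ℤ)^m * L ((j + (m : Fin t)).1)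
      = Caux p t L j.1 := by
    rw [← reindex_sum p t j.1 j.isLt L]
    refine Finset.sum_congr rfl fun m hm => ?_
    have hv : ((j + (m : Fin t)).1) = (j.1 + m) % t := by
      rw [Fin.add_def]
      simp only [Fin.val_natCast]
      conv_rhs => rw [Nat.add_mod, Nat.mod_eq_of_lt j.isLt]
    rw [hv]
  rw [hre] at htel
  linear_combination htel

private lemma main_core (p t n : ℕ) [NeZero t] (hp : 2 ≤ p) (L : ℕ → ℤ)
    (hLnn : ∀ ℓ, 0 ≤ L ℓ) (hLub : ∀ ℓ, L ℓ ≤ ((p:ℤ)-1)*((n:ℤ)+1))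
    {ℓ₀ : ℕ} (hℓ₀ : ℓ₀ < t) (hL0 : 0 < L ℓ₀)
    {ℓ₁ : ℕ} (hℓ₁ : ℓ₁ < t) (hL1 : L ℓ₁ < ((p:ℤ)-1)*((n:ℤ)+1))
    (hdvd : ((p:ℤ)^t - 1) ∣ Caux p t L 0) :
    ∃ s : Fin t → ℤ,
      (∀ j : Fin t, ((p:ℤ)^t - 1) * s j = Caux p t L j.1) ∧
      ∀ j : Fin t,
        (1 ≤ s j ∧ s j ≤ (n:ℤ) ∧ 0 ≤ (p:ℤ) * s (j+1) - s j ∧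
          (p:ℤ) * s (j+1) - s j ≤ ((p:ℤ)-1)*((n:ℤ)+1)) ∧
        (p:ℤ) * s (j+1) - s j = L j.1 := by
  have ht : 0 < t := Nat.pos_of_ne_zero (NeZero.ne t)
  have hppos : (0:ℤ) < (p:ℤ) := by exact_mod_cast (by omega : 0 < p)
  have hQpos : (0:ℤ) < (p:ℤ)^t - 1 := by
    have h1 : (1:ℤ) < (p:ℤ) := by exact_mod_cast hp
    have h2 : (1:ℤ) < (p:ℤ)^t := one_lt_pow₀ h1 ht.ne'
    linarith
  have hQne : ((p:ℤ)^t - 1) ≠ 0 := ne_of_gt hQpos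
  have hcop : IsCoprime ((p:ℤ)^t - 1) ((p:ℤ)) := by
    refine ⟨-1, (p:ℤ)^(t-1), ?_⟩
    have he : (p:ℤ)^(t-1) * (p:ℤ) = (p:ℤ)^t := by
      rw [← pow_succ]
      congr 1
      omega
    linarith [he]
  have hdvdj : ∀ j, j ≤ t → ((p:ℤ)^t - 1) ∣ Caux p t L j := by
    intro j hj
    have h1 : ((p:ℤ)^t - 1) ∣ (p:ℤ)^j * Caux p t L j := by
      rw [Caux_pow_mul p t L hj]
      exact dvd_add hdvd (Dvd.intro _ rfl)
    exact (hcop.pow_right).dvd_of_dvd_mul_left h1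
  set s : Fin t → ℤ := fun j => Caux p t L j.1 / ((p:ℤ)^t - 1) with hsdef
  have hs : ∀ j : Fin t, ((p:ℤ)^t - 1) * s j = Caux p t L j.1 := fun j =>
    Int.mul_ediv_cancel' (hdvdj j.1 j.isLt.le)
  refine ⟨s, hs, ?_⟩
  have hrecF : ∀ j : Fin t, (p:ℤ) * s (j+1) - s j = L j.1 := by
    intro j
    have hv : ((j+1 : Fin t)).1 = (j.1 + 1) % t := by
      rw [Fin.add_def]
      simp only [Fin.val_one']
      conv_rhs => rw [Nat.add_mod, Nat.mod_eq_of_lt j.isLt]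
    apply mul_left_cancel₀ hQne
    have expand : ((p:ℤ)^t-1) * ((p:ℤ) * s (j+1) - s j)
        = (p:ℤ) * (((p:ℤ)^t-1) * s (j+1)) - ((p:ℤ)^t-1) * s j := by ring
    rw [expand, hs (j+1), hs j, hv]
    rcases Nat.lt_or_ge (j.1 + 1) t with h | h
    · rw [Nat.mod_eq_of_lt h]
      exact Caux_rec p t L j.isLt
    · have hjt : j.1 + 1 = t := by
        have := j.isLt
        omega
      rw [hjt, Nat.mod_self, ← Caux_t p t L]
      have hr := Caux_rec p t L j.isLt
      rw [hjt] at hr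
      exact hr
  intro j
  refine ⟨⟨?_, ?_, ?_, ?_⟩, hrecF j⟩
  · have hpos : 0 < Caux p t L j.1 := Caux_pos p t (by omega) L hLnn hℓ₀ hL0 j.isLt.le
    have heq := hs j
    have hspos : 0 < s j := by
      by_contra hle
      push_neg at hle
      have hnp : ((p:ℤ)^t - 1) * s j ≤ 0 := mul_nonpos_of_nonneg_of_nonpos hQpos.le hle
      linarith [heq, hpos]
    omega
  · have hlt : Caux p t L j.1 < (((p:ℤ)-1)*((n:ℤ)+1)) * ∑ k ∈ Finset.range t, (p:ℤ)^k :=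
      Caux_lt p t (by omega) L _ hLub j.isLt.le hℓ₁ hL1
    have hgeom : (((p:ℤ)-1)*((n:ℤ)+1)) * ∑ k ∈ Finset.range t, (p:ℤ)^k
        = ((p:ℤ)^t - 1) * ((n:ℤ)+1) := by
      have hg := geom_sum_mul (p:ℤ) t
      linear_combination ((n:ℤ)+1) * hg
    rw [hgeom] at hlt
    have h2 : ((p:ℤ)^t - 1) * s j < ((p:ℤ)^t - 1) * ((n:ℤ)+1) := by
      rw [hs j]; exact hlt
    have h3 : s j < (n:ℤ) + 1 := lt_of_mul_lt_mul_left h2 hQpos.le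
    omega
  · rw [hrecF j]; exact hLnn j.1
  · rw [hrecF j]; exact hLub j.1

/-- `s ∈ ℋ` (conditions `1 ≤ s_j ≤ n`, `0 ≤ p s_{j+1} - s_j ≤ (p-1)(n+1)`,
indices mod `t`) together with `p s_{j+1} - s_j = λ_j(b)` for all `j`,
where `λ_j(b) = ∑_i a_{i,j}` is the sum of the `j`-th base-`p` digits of the
exponents `b_i`. -/
def TypeCond (p t n : ℕ) [NeZero t] (b : Fin (n + 1) → ℕ) (s : Fin t → ℤ) : Prop :=
  (∀ j : Fin t, 1 ≤ s j ∧ s j ≤ (n : ℤ) ∧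
      0 ≤ (p : ℤ) * s (j + 1) - s j ∧
      (p : ℤ) * s (j + 1) - s j ≤ ((p : ℤ) - 1) * ((n : ℤ) + 1)) ∧
  (∀ j : Fin t, (p : ℤ) * s (j + 1) - s j =
      ∑ i, (((b i / p ^ (j : ℕ)) % p : ℕ) : ℤ))

/-- For every nonconstant monomial exponent tuple `(b_0, …, b_n)` with
`0 ≤ b_i ≤ q - 1`, total degree divisible by `q - 1`, and not all `b_i = q - 1`,
there is a unique `(s_0, …, s_{t-1}) ∈ ℋ` with `λ_j = p s_{j+1} - s_j` for all
`j`; explicitly,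
`(q-1) s_j = ∑_i (∑_{ℓ<j} p^{ℓ+t-j} a_{i,ℓ} + ∑_{ℓ=j}^{t-1} p^{ℓ-j} a_{i,ℓ})`. -/
theorem exists_unique_type (p t n : ℕ) [Fact p.Prime] [NeZero t] (hn : 1 ≤ n)
    (q : ℕ) (hq : q = p ^ t) (b : Fin (n + 1) → ℕ)
    (hb : ∀ i, b i ≤ q - 1) (hb0 : b ≠ 0) (hbq : b ≠ fun _ => q - 1)
    (hdiv : (q - 1) ∣ ∑ i, b i) :
    (∃! s : Fin t → ℤ, TypeCond p t n b s) ∧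
    (∀ s : Fin t → ℤ, TypeCond p t n b s → ∀ j : Fin t,
      ((q : ℤ) - 1) * s j =
        ∑ i, ((∑ ℓ ∈ Finset.range (j : ℕ),
                (p : ℤ) ^ (ℓ + t - (j : ℕ)) * (((b i / p ^ ℓ) % p : ℕ) : ℤ)) +
              (∑ ℓ ∈ Finset.Ico (j : ℕ) t,
                (p : ℤ) ^ (ℓ - (j : ℕ)) * (((b i / p ^ ℓ) % p : ℕ) : ℤ)))) := by
  subst hq
  have hp2 : 2 ≤ p := (Fact.out : p.Prime).two_le
  have ht : 0 < t := Nat.pos_of_ne_zero (NeZero.ne t)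
  have hpt2 : 2 ≤ p ^ t := by
    calc 2 ≤ p := hp2
      _ = p ^ 1 := (pow_one p).symm
      _ ≤ p ^ t := Nat.pow_le_pow_right (by omega) ht
  set Lam : ℕ → ℤ := fun ℓ => ∑ i, (((b i / p ^ ℓ) % p : ℕ) : ℤ) with hLam
  have hblt : ∀ i, b i < p ^ t := fun i => by have := hb i; omega
  have hbsum : ∀ i, (b i : ℤ)
      = ∑ ℓ ∈ Finset.range t, (p:ℤ)^ℓ * (((b i / p^ℓ) % p : ℕ) : ℤ) := by
    intro i
    have hds := digit_sum p (b i) t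
    rw [Nat.mod_eq_of_lt (hblt i)] at hds
    exact_mod_cast hds.symm
  have hLnn : ∀ ℓ, 0 ≤ Lam ℓ := fun ℓ => Finset.sum_nonneg fun i _ => Int.natCast_nonneg _
  have hdiglt : ∀ (i : Fin (n+1)) (ℓ : ℕ), (((b i / p^ℓ) % p : ℕ) : ℤ) ≤ (p:ℤ) - 1 := by
    intro i ℓ
    have := Nat.mod_lt (b i / p^ℓ) (show 0 < p by omega)
    omega
  have hLub : ∀ ℓ, Lam ℓ ≤ ((p:ℤ) - 1) * ((n:ℤ) + 1) := by
    intro ℓ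
    calc Lam ℓ ≤ ∑ _i : Fin (n+1), ((p:ℤ) - 1) :=
        Finset.sum_le_sum fun i _ => hdiglt i ℓ
      _ = ((p:ℤ)-1) * ((n:ℤ)+1) := by
        rw [Finset.sum_const, Finset.card_univ, Fintype.card_fin, nsmul_eq_mul]
        push_cast
        ring
  -- positivity witness
  obtain ⟨i₀, hi₀⟩ := Function.ne_iff.mp hb0
  have hbi₀ : b i₀ ≠ 0 := by simpa using hi₀
  have hex0 : ∃ ℓ, ℓ < t ∧ 0 < b i₀ / p^ℓ % p := by
    by_contra hcon
    push_neg at hcon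
    have hz : (b i₀ : ℤ) = 0 := by
      rw [hbsum i₀]
      apply Finset.sum_eq_zero
      intro ℓ hℓ
      have h1 := hcon ℓ (Finset.mem_range.mp hℓ)
      have h2 : b i₀ / p^ℓ % p = 0 := by omega
      rw [h2]
      simp
    exact hbi₀ (by exact_mod_cast hz)
  obtain ⟨ℓ₀, hℓ₀t, hd0⟩ := hex0
  have hL0pos : 0 < Lam ℓ₀ := by
    have h1 : (0:ℤ) < (((b i₀ / p^ℓ₀) % p : ℕ) : ℤ) := by exact_mod_cast hd0
    calc (0:ℤ) < (((b i₀ / p^ℓ₀) % p : ℕ) : ℤ) := h1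
      _ ≤ Lam ℓ₀ := Finset.single_le_sum (fun i _ => Int.natCast_nonneg _) (Finset.mem_univ i₀)
  -- strictness witness
  obtain ⟨i₁, hi₁⟩ := Function.ne_iff.mp hbq
  have hbi₁ : b i₁ < p^t - 1 := by
    have h1 : b i₁ ≠ p^t - 1 := by simpa using hi₁
    have h2 := hb i₁
    omega
  have hex1 : ∃ ℓ, ℓ < t ∧ b i₁ / p^ℓ % p < p - 1 := by
    by_contra hcon
    push_neg at hcon
    have hdig : ∀ ℓ, ℓ < t → b i₁ / p^ℓ % p = p - 1 := by
      intro ℓ hℓ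
      have h1 := hcon ℓ hℓ
      have h2 := Nat.mod_lt (b i₁ / p^ℓ) (show 0 < p by omega)
      omega
    have heq : (b i₁ : ℤ) = (p:ℤ)^t - 1 := by
      rw [hbsum i₁]
      have hcg : ∀ ℓ ∈ Finset.range t,
          (p:ℤ)^ℓ * (((b i₁ / p^ℓ) % p : ℕ):ℤ) = (p:ℤ)^ℓ * ((p:ℤ) - 1) := by
        intro ℓ hℓ
        rw [hdig ℓ (Finset.mem_range.mp hℓ)]
        rw [Nat.cast_sub (by omega : 1 ≤ p)]
        norm_num
      rw [Finset.sum_congr rfl hcg, ← Finset.sum_mul, geom_sum_mul]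
    have hc : b i₁ = p^t - 1 := by
      have h2 : ((b i₁ : ℕ):ℤ) = ((p^t - 1 : ℕ):ℤ) := by
        rw [heq, Nat.cast_sub (by omega : 1 ≤ p^t)]
        push_cast
        ring
      exact_mod_cast h2
    omega
  obtain ⟨ℓ₁, hℓ₁t, hd1⟩ := hex1
  have hL1lt : Lam ℓ₁ < ((p:ℤ)-1) * ((n:ℤ)+1) := by
    have hstrict : (((b i₁ / p^ℓ₁) % p : ℕ) : ℤ) < (p:ℤ) - 1 := by
      have := hd1
      omega
    calc Lam ℓ₁ < ∑ _i : Fin (n+1), ((p:ℤ) - 1) :=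
        Finset.sum_lt_sum (fun i _ => hdiglt i ℓ₁) ⟨i₁, Finset.mem_univ i₁, hstrict⟩
      _ = ((p:ℤ)-1) * ((n:ℤ)+1) := by
        rw [Finset.sum_const, Finset.card_univ, Fintype.card_fin, nsmul_eq_mul]
        push_cast
        ring
  -- divisibility of Caux 0
  have hC0 : Caux p t Lam 0 = ∑ i, (b i : ℤ) := by
    rw [Caux_zero]
    calc ∑ ℓ ∈ Finset.range t, (p:ℤ)^ℓ * Lam ℓ
        = ∑ ℓ ∈ Finset.range t, ∑ i, (p:ℤ)^ℓ * (((b i / p^ℓ) % p : ℕ):ℤ) :=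
          Finset.sum_congr rfl fun ℓ _ => Finset.mul_sum _ _ _
      _ = ∑ i, ∑ ℓ ∈ Finset.range t, (p:ℤ)^ℓ * (((b i / p^ℓ) % p : ℕ):ℤ) := Finset.sum_comm
      _ = ∑ i, (b i : ℤ) := Finset.sum_congr rfl fun i _ => (hbsum i).symm
  have hdvdC0 : ((p:ℤ)^t - 1) ∣ Caux p t Lam 0 := by
    rw [hC0]
    have h1 : ((p^t - 1 : ℕ) : ℤ) ∣ ((∑ i, b i : ℕ) : ℤ) := Int.natCast_dvd_natCast.mpr hdiv
    rw [Nat.cast_sub (by omega : 1 ≤ p^t)] at h1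
    push_cast at h1 ⊢
    exact h1
  have hQpos : (0:ℤ) < (p:ℤ)^t - 1 := by
    have h2 : (2:ℤ) ≤ ((p^t : ℕ) : ℤ) := by exact_mod_cast hpt2
    push_cast at h2
    linarith
  have hQne : ((p:ℤ)^t - 1) ≠ 0 := ne_of_gt hQpos
  have hQcast : (((p^t : ℕ)):ℤ) - 1 = (p:ℤ)^t - 1 := by push_cast; ring
  obtain ⟨s₀, hs₀f, hs₀c⟩ :=
    main_core p t n hp2 Lam hLnn hLub hℓ₀t hL0pos hℓ₁t hL1lt hdvdC0
  have hTC₀ : TypeCond p t n b s₀ := ⟨fun j => (hs₀c j).1, fun j => (hs₀c j).2⟩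
  have hswap : ∀ jn : ℕ,
      (∑ i, ((∑ ℓ ∈ Finset.range jn, (p:ℤ)^(ℓ + t - jn) * (((b i / p^ℓ) % p : ℕ):ℤ))
        + ∑ ℓ ∈ Finset.Ico jn t, (p:ℤ)^(ℓ - jn) * (((b i / p^ℓ) % p : ℕ):ℤ)))
      = Caux p t Lam jn := by
    intro jn
    unfold Caux
    rw [Finset.sum_add_distrib]
    congr 1
    · rw [Finset.sum_comm]
      exact Finset.sum_congr rfl fun ℓ _ => (Finset.mul_sum _ _ _).symm
    · rw [Finset.sum_comm]
      exact Finset.sum_congr rfl fun ℓ _ => (Finset.mul_sum _ _ _).symm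
  constructor
  · refine ⟨s₀, hTC₀, ?_⟩
    intro s' hs'
    funext j
    have h1 := formula_core p t Lam s' hs'.2 j
    have h2 := hs₀f j
    exact mul_left_cancel₀ hQne (h1.trans h2.symm)
  · intro s hsT j
    rw [hQcast, hswap (j : ℕ)]
    exact formula_core p t Lam s hsT.2 j
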